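/- The function F(α) = (2κ+λ)(cosh α −1) + sqrt(γ² + λ² sinh² α) − γ is convex on ℝ. -/

import Mathlib

open Real Set

lemma cosh_convex : ConvexOn ℝ Set.univ Real.cosh := by
  apply convexOn_of_deriv2_nonneg convex_univ Real.continuous_cosh.continuousOn
  · exact Real.differentiable_cosh.differentiableOn
  · rw [Real.deriv_cosh]; exact Real.differentiable_sinh.differentiableOn
  · intro x _
    simp [Function.iterate_succ, Real.deriv_cosh, Real.deriv_sinh, (Real.cosh_pos x).le]

lemma sinh_convex_Ici : ConvexOn ℝ (Set.Ici (0:ℝ)) Real.sinh := by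
  apply convexOn_of_deriv2_nonneg (convex_Ici 0) Real.continuous_sinh.continuousOn
  · exact Real.differentiable_sinh.differentiableOn
  · rw [Real.deriv_sinh]; exact Real.differentiable_cosh.differentiableOn
  · intro x hx
    rw [interior_Ici] at hx
    simp only [Function.iterate_succ, Function.iterate_zero, Function.comp_apply, id_eq,
      Real.deriv_sinh, Real.deriv_cosh]
    exact Real.sinh_nonneg_iff.mpr hx.le

lemma sqrt_sq_add_convex (γ : ℝ) :
    ConvexOn ℝ Set.univ (fun t : ℝ => Real.sqrt (γ^2 + t^2)) := by
  have key : ∀ t : ℝ, Real.sqrt (γ^2 + t^2) = ‖(γ:ℂ) + t * Complex.I‖ := by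
    intro t
    rw [Complex.norm_add_mul_I]
  refine ⟨convex_univ, fun x _ y _ a b ha hb hab => ?_⟩
  simp only [key, smul_eq_mul]
  have hab' : (a:ℂ) + b = 1 := by exact_mod_cast hab
  have hz : ((γ:ℂ) + (↑a * ↑x + ↑b * ↑y) * Complex.I)
      = a • ((γ:ℂ) + x * Complex.I) + b • ((γ:ℂ) + y * Complex.I) := by
    simp only [Complex.real_smul]
    linear_combination -(γ:ℂ) * hab'
  push_cast
  rw [hz]
  calc ‖a • ((γ:ℂ) + x * Complex.I) + b • ((γ:ℂ) + y * Complex.I)‖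
      ≤ ‖a • ((γ:ℂ) + x * Complex.I)‖ + ‖b • ((γ:ℂ) + y * Complex.I)‖ := norm_add_le _ _
    _ = a * ‖(γ:ℂ) + x * Complex.I‖ + b * ‖(γ:ℂ) + y * Complex.I‖ := by
        rw [norm_smul, norm_smul, Real.norm_eq_abs, Real.norm_eq_abs,
          abs_of_nonneg ha, abs_of_nonneg hb]

/-- composition of a convex monotone function on `Ici 0` with a nonneg convex function -/
lemma comp_convex_nonneg {g f : ℝ → ℝ} (hg : ConvexOn ℝ (Set.Ici (0:ℝ)) g)
    (hmono : MonotoneOn g (Set.Ici (0:ℝ))) (hf : ConvexOn ℝ Set.univ f)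
    (hf0 : ∀ x, 0 ≤ f x) : ConvexOn ℝ Set.univ (fun x => g (f x)) := by
  refine ⟨convex_univ, fun x _ y _ a b ha hb hab => ?_⟩
  have h1 : a • f x + b • f y ∈ Set.Ici (0:ℝ) :=
    add_nonneg (smul_nonneg ha (hf0 x)) (smul_nonneg hb (hf0 y))
  refine le_trans (hmono (hf0 _) h1 (hf.2 (mem_univ x) (mem_univ y) ha hb hab)) ?_
  exact hg.2 (hf0 x) (hf0 y) ha hb hab

lemma sinh_abs' (α : ℝ) : Real.sinh |α| = |Real.sinh α| := by
  rcases le_or_gt 0 α with h | h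
  · rw [abs_of_nonneg h, abs_of_nonneg (Real.sinh_nonneg_iff.mpr h)]
  · rw [abs_of_neg h, Real.sinh_neg,
      abs_of_neg (by simpa using Real.sinh_lt_sinh.mpr h : Real.sinh α < 0)]

lemma abs_img_eq : (fun α : ℝ => |α|) '' Set.univ = Set.Ici (0:ℝ) := by
  ext t
  constructor
  · rintro ⟨x, _, rfl⟩; exact abs_nonneg x
  · intro ht; exact ⟨t, trivial, abs_of_nonneg ht⟩

lemma sqrt_part_convex (γ lam : ℝ) (hlam : 0 ≤ lam) :
    ConvexOn ℝ Set.univ (fun α : ℝ => Real.sqrt (γ^2 + lam^2 * (Real.sinh α)^2)) := by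
  have habs : ConvexOn ℝ Set.univ (fun α : ℝ => |α|) := by
    refine ⟨convex_univ, fun x _ y _ a b ha hb hab => ?_⟩
    have := abs_add_le (a * x) (b * y)
    rw [abs_mul, abs_mul, abs_of_nonneg ha, abs_of_nonneg hb] at this
    exact this
  have hcomp : ConvexOn ℝ Set.univ (Real.sinh ∘ fun α : ℝ => |α|) :=
    ConvexOn.comp (abs_img_eq ▸ sinh_convex_Ici) habs
      (abs_img_eq ▸ (Real.sinh_strictMono.monotone.monotoneOn _))
  have hu_conv : ConvexOn ℝ Set.univ (fun α : ℝ => lam * Real.sinh |α|) := by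
    simpa [Function.comp, smul_eq_mul] using hcomp.smul hlam
  have hu_nonneg : ∀ α : ℝ, 0 ≤ lam * Real.sinh |α| :=
    fun α => mul_nonneg hlam (Real.sinh_nonneg_iff.mpr (abs_nonneg α))
  have hmono : MonotoneOn (fun t : ℝ => Real.sqrt (γ^2 + t^2)) (Set.Ici (0:ℝ)) := by
    intro s hs t ht hst
    apply Real.sqrt_le_sqrt
    nlinarith [mem_Ici.mp hs, mem_Ici.mp ht]
  have hmain := comp_convex_nonneg
    ((sqrt_sq_add_convex γ).subset (Set.subset_univ _) (convex_Ici 0))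
    hmono hu_conv hu_nonneg
  have : (fun α : ℝ => Real.sqrt (γ^2 + lam^2 * (Real.sinh α)^2))
      = fun α : ℝ => Real.sqrt (γ^2 + (lam * Real.sinh |α|)^2) := by
    funext α
    rw [mul_pow, sinh_abs', sq_abs]
  rw [this]
  exact hmain

theorem free_energy_convex (κ lam γ : ℝ) (hκ : 0 ≤ κ) (hlam : 0 ≤ lam) (hγ : 0 ≤ γ) :
    ConvexOn ℝ Set.univ (fun α : ℝ => (2*κ + lam) * (Real.cosh α - 1)
        + Real.sqrt (γ^2 + lam^2 * (Real.sinh α)^2) - γ) := by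
  have h1 : ConvexOn ℝ Set.univ (fun α : ℝ => (2*κ + lam) • (Real.cosh α + (-1))) :=
    (cosh_convex.add_const (-1)).smul (by linarith)
  have h2 := sqrt_part_convex γ lam hlam
  have h3 := (h1.add h2).add_const (-γ)
  convert h3 using 1
  · rfl
  · funext α; simp only [Pi.add_apply, smul_eq_mul]; ring
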